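/- For t, α ≥ 0, μ > 0 and k ≥ 1, the function g_{α,k}(t) = k(μ² + t)^α / (k + (μ² + t)^α) satisfies g'_{α,k}(t)(μ² + t) ≤ α g_{α,k}(t) and |g''_{α,k}(t)|(μ² + t) ≤ 3(α + 1) g'_{α,k}(t) for all t ≥ 0. -/

import Mathlib

open Real

noncomputable def gTrunc (μ α k : ℝ) : ℝ → ℝ :=
  fun t => k * (μ ^ 2 + t) ^ α / (k + (μ ^ 2 + t) ^ α)

lemma rpow_hasDerivAt (μ α : ℝ) {t : ℝ} (ht : 0 < μ ^ 2 + t) :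
    HasDerivAt (fun s : ℝ => (μ ^ 2 + s) ^ α) (α * (μ ^ 2 + t) ^ (α - 1)) t := by
  have h1 : HasDerivAt (fun s : ℝ => μ ^ 2 + s) 1 t := (hasDerivAt_id t).const_add _
  have := (Real.hasDerivAt_rpow_const (p := α) (Or.inl ht.ne')).comp t h1
  rw [mul_one] at this; exact this

lemma hq_pos (μ α k : ℝ) (hk : 1 ≤ k) {t : ℝ} (ht : 0 < μ ^ 2 + t) :
    0 < k + (μ ^ 2 + t) ^ α := by
  have := Real.rpow_nonneg ht.le α
  linarith

lemma gTrunc_hasDerivAt (μ α k : ℝ) (hk : 1 ≤ k) {t : ℝ} (ht : 0 < μ ^ 2 + t) :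
    HasDerivAt (gTrunc μ α k)
      (k ^ 2 * α * (μ ^ 2 + t) ^ (α - 1) / (k + (μ ^ 2 + t) ^ α) ^ 2) t := by
  have h2 := rpow_hasDerivAt μ α ht
  have hq := hq_pos μ α k hk ht
  have h5 := (h2.const_mul k).div (h2.const_add k) hq.ne'
  refine h5.congr_deriv ?_
  congr 1; ring

lemma gTrunc_deriv (μ α k : ℝ) (hk : 1 ≤ k) {t : ℝ} (ht : 0 < μ ^ 2 + t) :
    deriv (gTrunc μ α k) t
      = k ^ 2 * α * (μ ^ 2 + t) ^ (α - 1) / (k + (μ ^ 2 + t) ^ α) ^ 2 :=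
  (gTrunc_hasDerivAt μ α k hk ht).deriv

lemma gTrunc_deriv2 (μ α k : ℝ) (hk : 1 ≤ k) {t : ℝ} (ht : 0 < μ ^ 2 + t) :
    deriv (deriv (gTrunc μ α k)) t
      = k ^ 2 * α * ((α - 1) * (μ ^ 2 + t) ^ (α - 2) * (k + (μ ^ 2 + t) ^ α) ^ 2
          - (μ ^ 2 + t) ^ (α - 1) * (2 * (k + (μ ^ 2 + t) ^ α)
              * (α * (μ ^ 2 + t) ^ (α - 1))))
          / ((k + (μ ^ 2 + t) ^ α) ^ 2) ^ 2 := by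
  have hEq : deriv (gTrunc μ α k) =ᶠ[nhds t]
      fun s => k ^ 2 * α * (μ ^ 2 + s) ^ (α - 1) / (k + (μ ^ 2 + s) ^ α) ^ 2 := by
    have hopen : IsOpen {s : ℝ | 0 < μ ^ 2 + s} :=
      isOpen_lt continuous_const (by continuity)
    filter_upwards [hopen.mem_nhds ht] with s hs
    exact gTrunc_deriv μ α k hk hs
  rw [Filter.EventuallyEq.deriv_eq hEq]
  -- derivative of G
  have h2 := rpow_hasDerivAt μ α ht
  have hq := hq_pos μ α k hk ht
  have hnum : HasDerivAt (fun s : ℝ => k ^ 2 * α * (μ ^ 2 + s) ^ (α - 1))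
      (k ^ 2 * α * ((α - 1) * (μ ^ 2 + t) ^ (α - 1 - 1))) t := by
    exact (rpow_hasDerivAt μ (α - 1) ht).const_mul _
  have hden : HasDerivAt (fun s : ℝ => (k + (μ ^ 2 + s) ^ α) ^ 2)
      (2 * (k + (μ ^ 2 + t) ^ α) * (α * (μ ^ 2 + t) ^ (α - 1))) t := by
    have := (h2.const_add k).pow 2
    exact this.congr_deriv (by push_cast; ring)
  have hden0 : ((k + (μ ^ 2 + t) ^ α) ^ 2) ≠ 0 := by positivity
  have h6 := hnum.div hden hden0
  rw [show deriv (fun s => k ^ 2 * α * (μ ^ 2 + s) ^ (α - 1) / (k + (μ ^ 2 + s) ^ α) ^ 2) t = _ from h6.deriv]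
  have : α - 1 - 1 = α - 2 := by ring
  rw [this]
  ring
lemma alg_ineq (α k u : ℝ) (hα : 0 ≤ α) (hk : 1 ≤ k) (hu : 0 < u) :
    k ^ 2 * α * u ^ (α - 1) / (k + u ^ α) ^ 2 * u ≤ α * (k * u ^ α / (k + u ^ α)) ∧
      |k ^ 2 * α * ((α - 1) * u ^ (α - 2) * (k + u ^ α) ^ 2
          - u ^ (α - 1) * (2 * (k + u ^ α) * (α * u ^ (α - 1)))) / ((k + u ^ α) ^ 2) ^ 2| * u
        ≤ 3 * (α + 1) * (k ^ 2 * α * u ^ (α - 1) / (k + u ^ α) ^ 2) := by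
  have hp : 0 < u ^ α := Real.rpow_pos_of_pos hu α
  have hq : 0 < k + u ^ α := by linarith
  have hpow1 : u ^ (α - 1) = u ^ α / u := by
    rw [Real.rpow_sub hu, Real.rpow_one]
  have hpow2 : u ^ (α - 2) = u ^ α / (u * u) := by
    rw [Real.rpow_sub hu, show (2:ℝ) = (1:ℝ) + 1 by norm_num, Real.rpow_add hu,
      Real.rpow_one]
  set p := u ^ α with hp_def
  set q := k + u ^ α with hq_def
  constructor
  · have key : k ^ 2 * α * u ^ (α - 1) / q ^ 2 * u = α * (k * p / q) * (k / q) := by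
      rw [hpow1]; field_simp
    rw [key]
    have hkq : k / q ≤ 1 := (div_le_one hq).2 (by simp only [hq_def]; linarith)
    have h0 : 0 ≤ α * (k * p / q) := by positivity
    calc α * (k * p / q) * (k / q) ≤ α * (k * p / q) * 1 := by gcongr
      _ = α * (k * p / q) := by ring
  · have hpq : p ≤ q := by simp only [hp_def, hq_def]; linarith
    have hE : |(α - 1) * q - 2 * α * p| ≤ 3 * (α + 1) * q := by
      rw [abs_le]
      constructor
      · nlinarith [mul_nonneg hα hp.le, mul_nonneg hα hq.le,
          mul_le_mul_of_nonneg_left hpq hα]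
      · nlinarith [mul_nonneg hα hp.le, mul_nonneg hα hq.le]
    have hc : (0:ℝ) ≤ k ^ 2 * α * p / (u * u * q ^ 3) := by positivity
    have hD : k ^ 2 * α * ((α - 1) * u ^ (α - 2) * q ^ 2
          - u ^ (α - 1) * (2 * q * (α * u ^ (α - 1)))) / (q ^ 2) ^ 2
        = (k ^ 2 * α * p / (u * u * q ^ 3)) * ((α - 1) * q - 2 * α * p) := by
      rw [hpow1, hpow2]; field_simp
    rw [hD, abs_mul, abs_of_nonneg hc, hpow1]
    calc k ^ 2 * α * p / (u * u * q ^ 3) * |(α - 1) * q - 2 * α * p| * u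
        ≤ k ^ 2 * α * p / (u * u * q ^ 3) * (3 * (α + 1) * q) * u := by gcongr
      _ = 3 * (α + 1) * (k ^ 2 * α * (p / u) / q ^ 2) := by field_simp

/-- Derivative estimates for the smooth truncation: for `t, α ≥ 0`, `μ > 0`, `k ≥ 1`,
`g'_{α,k}(t)(μ²+t) ≤ α g_{α,k}(t)` and `|g''_{α,k}(t)|(μ²+t) ≤ 3(α+1) g'_{α,k}(t)`. -/
theorem stmt6 (μ α k : ℝ) (hμ : 0 < μ) (hα : 0 ≤ α) (hk : 1 ≤ k) :
    ∀ t : ℝ, 0 ≤ t →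
      deriv (gTrunc μ α k) t * (μ ^ 2 + t) ≤ α * gTrunc μ α k t ∧
        |deriv (deriv (gTrunc μ α k)) t| * (μ ^ 2 + t) ≤
          3 * (α + 1) * deriv (gTrunc μ α k) t := by
  intro t ht
  have hu : 0 < μ ^ 2 + t := by positivity
  rw [gTrunc_deriv μ α k hk hu, gTrunc_deriv2 μ α k hk hu]
  simpa [gTrunc] using alg_ineq α k (μ ^ 2 + t) hα hk hu
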